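/- Let A = I − E be an n×n real matrix such that |e_{ij}| ≤ ε for all i ≠ j and e_{ii} ≤ δ for 1 ≤ i ≤ n (a one-sided condition on the diagonal). If 0 ≤ δ ≤ 1 − (n−1)ε, then det(A) ≥ (1 − δ − (n−1)ε)(1 − δ + ε)^{n−1}. -/

import Mathlib

open Matrix Finset


lemma det_eq_pivot_mul (n : ℕ) (A : Matrix (Fin (n+1)) (Fin (n+1)) ℝ)
    (ha : A 0 0 ≠ 0) :
    A.det = A 0 0 * (Matrix.det (fun i j : Fin n =>
      A i.succ j.succ - A i.succ 0 * A 0 j.succ / A 0 0)) := by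
  classical
  set L : Matrix (Fin (n+1)) (Fin (n+1)) ℝ :=
    fun i k => if i = k then 1 else if k = 0 then -(A i 0 / A 0 0) else 0 with hL
  have hdetL : L.det = 1 := by
    have htri : L.BlockTriangular OrderDual.toDual := by
      intro i j hij
      have hij' : i < j := hij
      have h1 : i ≠ j := ne_of_lt hij'
      have h2 : j ≠ 0 := by
        intro h; subst h; exact (Fin.not_lt_zero _ hij')
      simp [hL, h1, h2]
    rw [Matrix.det_of_lowerTriangular L htri]
    apply Finset.prod_eq_one
    intro i _
    simp [hL]
  have hmul : ∀ i j, (L * A) i j =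
      if i = 0 then A 0 j else A i j - A i 0 * A 0 j / A 0 0 := by
    intro i j
    rw [Matrix.mul_apply]
    by_cases hi : i = 0
    · subst hi
      rw [if_pos rfl]
      rw [Finset.sum_eq_single 0]
      · simp [hL]
      · intro k _ hk; simp [hL, Ne.symm hk, hk]
      · simp
    · rw [if_neg hi]
      have hsub : ({0, i} : Finset (Fin (n+1))) ⊆ Finset.univ := Finset.subset_univ _
      rw [← Finset.sum_subset hsub]
      · rw [Finset.sum_pair (Ne.symm hi)]
        simp only [hL, if_pos rfl, if_true, if_neg hi]
        ring
      · intro k _ hk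
        simp only [Finset.mem_insert, Finset.mem_singleton, not_or] at hk
        simp [hL, Ne.symm hk.2, hk.1]
  have hdet2 : (L * A).det = A.det := by
    rw [Matrix.det_mul, hdetL, one_mul]
  rw [← hdet2, Matrix.det_succ_column_zero]
  rw [Finset.sum_eq_single 0]
  · have h00 : (L * A) 0 0 = A 0 0 := by rw [hmul]; simp
    have hB : ((L * A).submatrix (Fin.succAbove 0) Fin.succ) =
        (fun i j : Fin n => A i.succ j.succ - A i.succ 0 * A 0 j.succ / A 0 0) := by
      funext i j
      simp only [Matrix.submatrix_apply, Fin.succAbove_zero]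
      rw [hmul]
      simp [Fin.succ_ne_zero]
    rw [h00, hB]
    simp
  · intro i _ hi
    have : (L * A) i 0 = 0 := by
      rw [hmul, if_neg hi]
      field_simp
      ring
    rw [this]; ring
  · simp

lemma det_lb_aux (n : ℕ) : ∀ d ε : ℝ, 0 ≤ ε → (n:ℝ)*ε ≤ d →
    ∀ A : Matrix (Fin (n+1)) (Fin (n+1)) ℝ,
    (∀ i, d ≤ A i i) → (∀ i j, i ≠ j → |A i j| ≤ ε) →
    (d - (n:ℝ)*ε) * (d+ε)^n ≤ A.det := by
  induction n with
  | zero =>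
    intro d ε hε hd A hdiag hoff
    rw [Matrix.det_fin_one]
    simpa using hdiag 0
  | succ n ih =>
    intro d ε hε hd A hdiag hoff
    push_cast at hd ⊢
    have hεd : ε ≤ d := by nlinarith [mul_nonneg (Nat.cast_nonneg n : (0:ℝ) ≤ n) hε]
    have hd0 : 0 ≤ d := le_trans hε hεd
    rcases eq_or_lt_of_le hd0 with hdz | hdpos
    · -- d = 0, hence ε = 0, A has zero off-diagonal
      have hε0 : ε = 0 := le_antisymm (by linarith) hε
      have hAdiag : A = Matrix.diagonal (fun i => A i i) := by
        ext i j
        by_cases h : i = j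
        · subst h; simp
        · have := hoff i j h
          rw [hε0] at this
          have : A i j = 0 := abs_nonpos_iff.mp this
          simp [Matrix.diagonal, h, this]
      rw [hAdiag, Matrix.det_diagonal]
      have h1 : (d - ((n:ℝ)+1)*ε) * (d+ε)^(n+1) = 0 := by
        rw [hε0, ← hdz]; ring
      rw [h1]
      apply Finset.prod_nonneg
      intro i _
      exact le_trans hd0 (hdiag i)
    · -- d > 0
      have ha : d ≤ A 0 0 := hdiag 0
      have hapos : 0 < A 0 0 := lt_of_lt_of_le hdpos ha
      set B : Matrix (Fin (n+1)) (Fin (n+1)) ℝ :=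
        fun i j => A i.succ j.succ - A i.succ 0 * A 0 j.succ / A 0 0 with hB
      have hdetA : A.det = A 0 0 * B.det :=
        det_eq_pivot_mul (n+1) A (ne_of_gt hapos)
      set d' : ℝ := d - ε^2/d with hd'
      set ε' : ℝ := ε + ε^2/d with hε'
      have hcorr : ∀ i j : Fin (n+1), |A i.succ 0 * A 0 j.succ / A 0 0| ≤ ε^2/d := by
        intro i j
        rw [abs_div, abs_of_pos hapos, div_le_div_iff₀ hapos hdpos]
        have h1 : |A i.succ 0| ≤ ε := hoff _ _ (Fin.succ_ne_zero i)
        have h2 : |A 0 j.succ| ≤ ε := hoff _ _ (Ne.symm (Fin.succ_ne_zero j))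
        have h3 : |A i.succ 0 * A 0 j.succ| ≤ ε * ε := by
          rw [abs_mul]
          exact mul_le_mul h1 h2 (abs_nonneg _) hε
        calc |A i.succ 0 * A 0 j.succ| * d ≤ (ε*ε) * d := by
              apply mul_le_mul_of_nonneg_right h3 hd0
          _ ≤ ε^2 * A 0 0 := by nlinarith
      have hε'0 : 0 ≤ ε' := by
        rw [hε']; positivity
      have hBdiag : ∀ i, d' ≤ B i i := by
        intro i
        have h1 := hcorr i i
        have h2 := hdiag i.succ
        have := abs_le.mp h1
        simp only [hB]
        linarith [this.2]
      have hBoff : ∀ i j, i ≠ j → |B i j| ≤ ε' := by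
        intro i j hij
        have h1 : |A i.succ j.succ| ≤ ε :=
          hoff _ _ (fun h => hij (Fin.succ_injective _ h))
        have h2 := hcorr i j
        simp only [hB]
        calc |A i.succ j.succ - A i.succ 0 * A 0 j.succ / A 0 0|
            ≤ |A i.succ j.succ| + |A i.succ 0 * A 0 j.succ / A 0 0| := abs_sub _ _
          _ ≤ ε + ε^2/d := add_le_add h1 h2
      have hdne : d ≠ 0 := ne_of_gt hdpos
      have ht : ε^2/d * d = ε^2 := div_mul_cancel₀ _ hdne
      have ht0 : 0 ≤ ε^2/d := by positivity
      have hd'bound : (n:ℝ)*ε' ≤ d' := by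
        have hmul : (n:ℝ)*ε' * d ≤ d' * d := by
          rw [hd', hε']
          nlinarith [ht, mul_nonneg (sub_nonneg.2 hd) hd0, mul_nonneg (sub_nonneg.2 hd) hε]
        exact le_of_mul_le_mul_right hmul hdpos
      have hIH := ih d' ε' hε'0 hd'bound B hBdiag hBoff
      have hsum : d' + ε' = d + ε := by rw [hd', hε']; ring
      rw [hsum] at hIH
      have hrhs0 : 0 ≤ (d' - (n:ℝ)*ε') * (d+ε)^n := by
        apply mul_nonneg (by linarith [mul_nonneg (Nat.cast_nonneg n : (0:ℝ) ≤ n) hε'0])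
        positivity
      have hfac : d * (d' - (n:ℝ)*ε') = (d - ((n:ℝ)+1)*ε) * (d+ε) := by
        rw [hd', hε']
        field_simp
        ring
      have hkey : (d - ((n:ℝ)+1)*ε) * (d+ε)^(n+1) = d * ((d' - (n:ℝ)*ε') * (d+ε)^n) := by
        rw [pow_succ, ← mul_assoc, mul_comm (d - ((n:ℝ)+1)*ε) _, mul_assoc]
        rw [← hfac]
        ring
      rw [hdetA, hkey]
      calc d * ((d' - (n:ℝ)*ε') * (d+ε)^n) ≤ A 0 0 * ((d' - (n:ℝ)*ε') * (d+ε)^n) :=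
            mul_le_mul_of_nonneg_right ha hrhs0
        _ ≤ A 0 0 * B.det := mul_le_mul_of_nonneg_left hIH (le_of_lt hapos)

/-- One-sided diagonal condition: if `A = I - E` with `|e i j| ≤ ε` for `i ≠ j`,
`e i i ≤ δ` (only an upper bound on the diagonal), and `0 ≤ δ ≤ 1 - (n-1) ε`, then
`det A ≥ (1 - δ - (n-1) ε) (1 - δ + ε)^(n-1)`. -/
theorem det_lower_bound_one_sided_diag
    (n : ℕ) (hn : 1 ≤ n) (δ ε : ℝ) (hε : 0 ≤ ε)
    (hδ : 0 ≤ δ) (hsize : δ ≤ 1 - ((n : ℝ) - 1) * ε)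
    (E A : Matrix (Fin n) (Fin n) ℝ)
    (hA : A = 1 - E)
    (hoff : ∀ i j, i ≠ j → |E i j| ≤ ε)
    (hdiag : ∀ i, E i i ≤ δ) :
    (1 - δ - ((n : ℝ) - 1) * ε) * (1 - δ + ε) ^ (n - 1) ≤ A.det := by
  obtain ⟨m, rfl⟩ : ∃ m, n = m + 1 := ⟨n - 1, (Nat.succ_pred_eq_of_pos hn).symm⟩
  have hcast : ((m + 1 : ℕ) : ℝ) - 1 = (m : ℝ) := by push_cast; ring
  rw [hcast] at hsize ⊢
  have hd : (m:ℝ) * ε ≤ 1 - δ := by linarith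
  have hAdiag : ∀ i, 1 - δ ≤ A i i := by
    intro i
    rw [hA]
    simp only [Matrix.sub_apply, Matrix.one_apply_eq]
    linarith [hdiag i]
  have hAoff : ∀ i j, i ≠ j → |A i j| ≤ ε := by
    intro i j hij
    rw [hA]
    simp only [Matrix.sub_apply, Matrix.one_apply_ne hij, zero_sub, abs_neg]
    exact hoff i j hij
  have := det_lb_aux m (1 - δ) ε hε hd A hAdiag hAoff
  simpa [sub_sub] using this
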